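/- Let y ∈ A, let V be a subgradient tuple at y, let c_0 > 0, let x̂ be a global minimiser of Γ(·, y, V) over A, and suppose that for every c ≥ c_0 a global minimiser x(c) of Q_c(·, y, V) over A is chosen. If Γ(x̂, y, V) = Γ(y, y, V), then for every ε > 0 there exists c* ≥ c_0 such that for all c ≥ c* one has Γ(x(c), y, V) ≤ Γ(x̂, y, V) + ε. -/
import Mathlib


open RealInnerProductSpace Finset Filter Topology

noncomputable section

/-- Euclidean space `ℝ^d`. -/
abbrev Euc (d : ℕ) := EuclideanSpace ℝ (Fin d)

/-- The (convex-analysis) subdifferential of `f` at `y`. -/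
def subdiff {d : ℕ} (f : Euc d → ℝ) (y : Euc d) : Set (Euc d) :=
  {v | ∀ x, f y + ⟪v, x - y⟫ ≤ f x}

/-- The normal cone to `A` at `x`. -/
def normalCone {d : ℕ} (A : Set (Euc d)) (x : Euc d) : Set (Euc d) :=
  {v | ∀ y ∈ A, ⟪v, y - x⟫ ≤ 0}

/-- A subgradient tuple `V = (v₀, vᵢ (i ∈ I), vⱼ, wⱼ (j ∈ E))` at the point `y`:
`v_k ∈ ∂h_k(y)` for `k ∈ {0} ∪ I ∪ E` and `w_j ∈ ∂g_j(y)` for `j ∈ E`. -/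
structure SubgradTuple {d l p : ℕ} (h0 : Euc d → ℝ) (hI : Fin l → Euc d → ℝ)
    (gE hE : Fin p → Euc d → ℝ) (y : Euc d) : Type where
  v0 : Euc d
  vI : Fin l → Euc d
  vE : Fin p → Euc d
  wE : Fin p → Euc d
  v0_mem : v0 ∈ subdiff h0 y
  vI_mem : ∀ i, vI i ∈ subdiff (hI i) y
  vE_mem : ∀ j, vE j ∈ subdiff (hE j) y
  wE_mem : ∀ j, wE j ∈ subdiff (gE j) y

variable {d l p : ℕ}

/-- The linearised infeasibility measure `Γ(x, y, V)`. -/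
def Gam (gI : Fin l → Euc d → ℝ) {h0 : Euc d → ℝ} {hI : Fin l → Euc d → ℝ}
    {gE hE : Fin p → Euc d → ℝ} {y : Euc d}
    (V : SubgradTuple h0 hI gE hE y) (x : Euc d) : ℝ :=
  (∑ i, max (gI i x - hI i y - ⟪V.vI i, x - y⟫) 0)
  + ∑ j, max (gE j x - hE j y - ⟪V.vE j, x - y⟫)
      (hE j x - gE j y - ⟪V.wE j, x - y⟫)

/-- The convex majorant `Q_c(x, y, V)` of the penalty function. -/
def Qfun (g0 : Euc d → ℝ) (gI : Fin l → Euc d → ℝ) {h0 : Euc d → ℝ}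
    {hI : Fin l → Euc d → ℝ} {gE hE : Fin p → Euc d → ℝ} {y : Euc d}
    (V : SubgradTuple h0 hI gE hE y) (c : ℝ) (x : Euc d) : ℝ :=
  g0 x - ⟪V.v0, x - y⟫ + c * Gam gI V x

/-- The ℓ1 penalty term `φ`. -/
def phi (gI hI : Fin l → Euc d → ℝ) (gE hE : Fin p → Euc d → ℝ) (x : Euc d) : ℝ :=
  (∑ i, max (gI i x - hI i x) 0) + ∑ j, |gE j x - hE j x|

/-- The ℓ1 penalty function `Φ_c = f₀ + c φ`. -/
def Phi (g0 h0 : Euc d → ℝ) (gI hI : Fin l → Euc d → ℝ) (gE hE : Fin p → Euc d → ℝ)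
    (c : ℝ) (x : Euc d) : ℝ :=
  (g0 x - h0 x) + c * phi gI hI gE hE x

/-- Feasibility for the problem (P). -/
def Feasible (A : Set (Euc d)) (gI hI : Fin l → Euc d → ℝ)
    (gE hE : Fin p → Euc d → ℝ) (x : Euc d) : Prop :=
  x ∈ A ∧ (∀ i, gI i x - hI i x ≤ 0) ∧ (∀ j, gE j x - hE j x = 0)

/-- Criticality for the problem (P) (Definition 1). -/
def IsCritical (A : Set (Euc d)) (g0 h0 : Euc d → ℝ) (gI hI : Fin l → Euc d → ℝ)
    (gE hE : Fin p → Euc d → ℝ) (x : Euc d) : Prop :=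
  ∃ V : SubgradTuple h0 hI gE hE x, ∃ lam : Fin l → ℝ, ∃ mu1 mu2 : Fin p → ℝ,
    (∀ i, 0 ≤ lam i) ∧ (∀ j, 0 ≤ mu1 j) ∧ (∀ j, 0 ≤ mu2 j) ∧
    (∀ i, lam i * (gI i x - hI i x) = 0) ∧
    ∃ u0 ∈ subdiff g0 x, ∃ uI : Fin l → Euc d, (∀ i, uI i ∈ subdiff (gI i) x) ∧
    ∃ uE : Fin p → Euc d, (∀ j, uE j ∈ subdiff (gE j) x) ∧
    ∃ zE : Fin p → Euc d, (∀ j, zE j ∈ subdiff (hE j) x) ∧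
    ∃ ν ∈ normalCone A x,
      (0 : Euc d) = (u0 - V.v0) + (∑ i, lam i • (uI i - V.vI i))
        + (∑ j, mu1 j • (uE j - V.vE j)) - (∑ j, mu2 j • (V.wE j - zE j)) + ν

/-- Generalised criticality for the penalty parameter `c`. -/
def IsGenCritical (A : Set (Euc d)) (g0 h0 : Euc d → ℝ) (gI hI : Fin l → Euc d → ℝ)
    (gE hE : Fin p → Euc d → ℝ) (c : ℝ) (x : Euc d) : Prop :=
  x ∈ A ∧ ∃ V : SubgradTuple h0 hI gE hE x, ∀ z ∈ A, Qfun g0 gI V c x ≤ Qfun g0 gI V c z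

/-- Criticality for the penalty term `φ`. -/
def IsCriticalPen (A : Set (Euc d)) (h0 : Euc d → ℝ) (gI hI : Fin l → Euc d → ℝ)
    (gE hE : Fin p → Euc d → ℝ) (x : Euc d) : Prop :=
  x ∈ A ∧ ∃ V : SubgradTuple h0 hI gE hE x, ∀ z ∈ A, Gam gI V x ≤ Gam gI V z

/-- `F` is coercive on `A`. -/
def CoerciveOn {d : ℕ} (F : Euc d → ℝ) (A : Set (Euc d)) : Prop :=
  ∀ u : ℕ → Euc d, (∀ n, u n ∈ A) → Tendsto (fun n => ‖u n‖) atTop atTop →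
    Tendsto (fun n => F (u n)) atTop atTop

theorem stmt8 {d l p : ℕ} (A : Set (Euc d)) (g0 h0 : Euc d → ℝ)
    (gI hI : Fin l → Euc d → ℝ) (gE hE : Fin p → Euc d → ℝ)
    (hA : Convex ℝ A) (hAcl : IsClosed A) (hAne : A.Nonempty)
    (hg0 : ConvexOn ℝ Set.univ g0) (hh0 : ConvexOn ℝ Set.univ h0)
    (hgI : ∀ i, ConvexOn ℝ Set.univ (gI i)) (hhI : ∀ i, ConvexOn ℝ Set.univ (hI i))
    (hgE : ∀ j, ConvexOn ℝ Set.univ (gE j)) (hhE : ∀ j, ConvexOn ℝ Set.univ (hE j))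
    (y : Euc d) (hyA : y ∈ A) (V : SubgradTuple h0 hI gE hE y)
    (c0 : ℝ) (hc0 : 0 < c0)
    (xhat : Euc d) (hxhatA : xhat ∈ A) (hxhat : ∀ z ∈ A, Gam gI V xhat ≤ Gam gI V z)
    (xsel : ℝ → Euc d)
    (hsel : ∀ c ≥ c0, xsel c ∈ A ∧ ∀ z ∈ A, Qfun g0 gI V c (xsel c) ≤ Qfun g0 gI V c z)
    (heq : Gam gI V xhat = Gam gI V y) :
    ∀ ε : ℝ, 0 < ε → ∃ cs ≥ c0, ∀ c ≥ cs, Gam gI V (xsel c) ≤ Gam gI V xhat + ε := by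
  intro ε hε
  obtain ⟨hx0A, hx0min⟩ := hsel c0 le_rfl
  set ψ : Euc d → ℝ := fun x => g0 x - ⟪V.v0, x - y⟫ with hψ
  have hQdef : ∀ c x, Qfun g0 gI V c x = ψ x + c * Gam gI V x := by
    intro c x; simp [Qfun, hψ]
  have hψy : ψ y = g0 y := by simp [hψ]
  have hGy : Gam gI V y = Gam gI V xhat := heq.symm
  set K : ℝ := g0 y - ψ (xsel c0) with hK
  refine ⟨max c0 (K / ε), le_max_left _ _, ?_⟩
  intro c hc
  have hcc0 : c0 ≤ c := le_trans (le_max_left _ _) hc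
  have hcpos : 0 < c := lt_of_lt_of_le hc0 hcc0
  obtain ⟨hxcA, hxcmin⟩ := hsel c hcc0
  -- Gam (xsel c) ≤ Gam (xsel c0)
  have hGle : Gam gI V (xsel c) ≤ Gam gI V (xsel c0) := by
    rcases eq_or_lt_of_le hcc0 with h | h
    · rw [← h]
    · have h2 := hxcmin (xsel c0) hx0A
      have h3 := hx0min (xsel c) hxcA
      rw [hQdef, hQdef] at h2 h3
      nlinarith
  -- ψ (xsel c0) ≤ ψ (xsel c)
  have hψle : ψ (xsel c0) ≤ ψ (xsel c) := by
    have h3 := hx0min (xsel c) hxcA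
    rw [hQdef, hQdef] at h3
    nlinarith
  -- main bound from comparing with y
  have hmain : ψ (xsel c) + c * Gam gI V (xsel c) ≤ g0 y + c * Gam gI V xhat := by
    have h1 := hxcmin y hyA
    rw [hQdef, hQdef, hψy, hGy] at h1
    exact h1
  have hbound : Gam gI V (xsel c) - Gam gI V xhat ≤ K / c := by
    rw [le_div_iff₀ hcpos]
    nlinarith
  have hKc : K / c ≤ ε := by
    rw [div_le_iff₀ hcpos]
    have h1 : K / ε ≤ c := le_trans (le_max_right _ _) hc
    have := (div_le_iff₀ hε).mp h1
    linarith
  linarith
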